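/- Let $p$ be a prime and $n \geq 2$. In $\mathrm{GL}_2(\mathbb{Q}_p)$, let $I_{1,m}$ denote the subgroup of matrices $\begin{pmatrix} a & b \\ pc & d \end{pmatrix}$ with $a,b,c,d \in \mathbb{Z}_p$, $a,d \in \mathbb{Z}_p^\times$, and $b \equiv 0 \pmod{p^m}$. Then the double cosets $I_{1,n-1}\begin{pmatrix}1&0\\0&p\end{pmatrix}I_{1,n-1}$ and $I_{1,n-2}\begin{pmatrix}1&0\\0&p\end{pmatrix}I_{1,n-1}$ are equal as subsets of $\mathrm{GL}_2(\mathbb{Q}_p)$. -/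

import Mathlib

open scoped Pointwise

/-- The Iwahori-type subgroup `I_{1,m}` of `GL₂(ℚ_p)`, viewed as the set of `2×2`
matrices `(a b; pc d)` with `a, d ∈ ℤ_p^×`, `c ∈ ℤ_p` and `b ≡ 0 mod p^m`,
described via the `p`-adic norms of the entries. -/
def Iset (p : ℕ) [Fact p.Prime] (m : ℕ) : Set (Matrix (Fin 2) (Fin 2) ℚ_[p]) :=
  {g | ‖g 0 0‖ = 1 ∧ ‖g 0 1‖ ≤ (p : ℝ) ^ (-(m : ℤ)) ∧ ‖g 1 0‖ ≤ (p : ℝ)⁻¹ ∧ ‖g 1 1‖ = 1}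

section Aux
variable {p : ℕ} [Fact p.Prime]

lemma padic_add_norm_eq' (x y : ℚ_[p]) (h : ‖y‖ < ‖x‖) : ‖x + y‖ = ‖x‖ := by
  rw [Padic.add_eq_max_of_ne (by linarith : ‖x‖ ≠ ‖y‖)]
  exact max_eq_left h.le

lemma ppos' : (0:ℝ) < (p:ℝ) := by exact_mod_cast (Fact.out : p.Prime).pos

lemma pone' : (1:ℝ) ≤ (p:ℝ) := by exact_mod_cast (Fact.out : p.Prime).one_le

lemma zpow_le_one' (m : ℕ) : (p:ℝ) ^ (-(m:ℤ)) ≤ 1 := by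
  calc (p:ℝ) ^ (-(m:ℤ)) ≤ (p:ℝ) ^ (0:ℤ) := by
        apply zpow_le_zpow_right₀ pone'; omega
    _ = 1 := zpow_zero _

lemma pinv_lt_one' : (p:ℝ)⁻¹ < 1 := by
  rw [inv_lt_one_iff₀]; right
  exact_mod_cast (Fact.out : p.Prime).one_lt

lemma Iset_mul_mem' {m : ℕ} {g h : Matrix (Fin 2) (Fin 2) ℚ_[p]}
    (hg : g ∈ Iset p m) (hh : h ∈ Iset p m) : g * h ∈ Iset p m := by
  obtain ⟨g1, g2, g3, g4⟩ := hg
  obtain ⟨h1, h2, h3, h4⟩ := hh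
  have hm : (p:ℝ) ^ (-(m:ℤ)) ≤ 1 := zpow_le_one' m
  have hp1 : (p:ℝ)⁻¹ < 1 := pinv_lt_one'
  have hp0 : (0:ℝ) < (p:ℝ)⁻¹ := inv_pos.mpr ppos'
  refine ⟨?_, ?_, ?_, ?_⟩
  · rw [Matrix.mul_apply, Fin.sum_univ_two, padic_add_norm_eq']
    · rw [norm_mul, g1, h1, one_mul]
    · rw [norm_mul, norm_mul, g1, h1, one_mul]
      calc ‖g 0 1‖ * ‖h 1 0‖ ≤ 1 * (p:ℝ)⁻¹ := by
            apply mul_le_mul (le_trans g2 hm) h3 (norm_nonneg _) zero_le_one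
        _ < 1 := by rwa [one_mul]
  · rw [Matrix.mul_apply, Fin.sum_univ_two]
    refine le_trans (Padic.nonarchimedean _ _) (max_le ?_ ?_)
    · rw [norm_mul, g1, one_mul]; exact h2
    · rw [norm_mul, h4, mul_one]; exact g2
  · rw [Matrix.mul_apply, Fin.sum_univ_two]
    refine le_trans (Padic.nonarchimedean _ _) (max_le ?_ ?_)
    · rw [norm_mul, h1, mul_one]; exact g3
    · rw [norm_mul, g4, one_mul]; exact h3
  · rw [Matrix.mul_apply, Fin.sum_univ_two, add_comm, padic_add_norm_eq']
    · rw [norm_mul, g4, h4, one_mul]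
    · rw [norm_mul, norm_mul, g4, h4, mul_one]
      calc ‖g 1 0‖ * ‖h 0 1‖ ≤ (p:ℝ)⁻¹ * (p:ℝ)^(-(m:ℤ)) := by
            apply mul_le_mul g3 h2 (norm_nonneg _) hp0.le
        _ ≤ (p:ℝ)⁻¹ * 1 := mul_le_mul_of_nonneg_left hm hp0.le
        _ < 1 := by rwa [mul_one]

end Aux

/-- For `n ≥ 2`, the double cosets `I_{1,n-1} diag(1,p) I_{1,n-1}` and
`I_{1,n-2} diag(1,p) I_{1,n-1}` coincide as subsets of `GL₂(ℚ_p)`. -/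
theorem stmt_10 (p : ℕ) [Fact p.Prime] (n : ℕ) (hn : 2 ≤ n) :
    Iset p (n - 1) * ({!![1, 0; 0, (p : ℚ_[p])]} : Set (Matrix (Fin 2) (Fin 2) ℚ_[p]))
        * Iset p (n - 1)
      = Iset p (n - 2) * ({!![1, 0; 0, (p : ℚ_[p])]} : Set (Matrix (Fin 2) (Fin 2) ℚ_[p]))
        * Iset p (n - 1) := by
  have hsub : Iset p (n - 1) ⊆ Iset p (n - 2) := by
    rintro g ⟨g1, g2, g3, g4⟩
    refine ⟨g1, le_trans g2 ?_, g3, g4⟩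
    apply zpow_le_zpow_right₀ pone'
    omega
  apply Set.Subset.antisymm
  · exact Set.mul_subset_mul_right (Set.mul_subset_mul_right hsub)
  · rintro x ⟨_, ⟨g, hg, D, hD, rfl⟩, u, hu, rfl⟩
    rw [Set.mem_singleton_iff] at hD
    subst hD
    obtain ⟨g1, g2, g3, g4⟩ := hg
    set a := g 0 0 with ha
    set b := g 0 1 with hb
    set c := g 1 0 with hc
    set d := g 1 1 with hd
    have ha0 : a ≠ 0 := by
      intro h; rw [h] at g1; simp at g1
    have hpne : ((p:ℚ_[p]) ≠ 0) := by
      exact_mod_cast (Fact.out : p.Prime).ne_zero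
    have hp0' : (0:ℝ) < (p:ℝ)⁻¹ := inv_pos.mpr ppos'
    have hnorma : ‖a⁻¹‖ = 1 := by rw [norm_inv, g1, inv_one]
    -- key norm bound
    have hkey : ‖c * (b / a)‖ < 1 := by
      rw [div_eq_mul_inv, norm_mul, norm_mul, hnorma, mul_one]
      calc ‖c‖ * ‖b‖ ≤ (p:ℝ)⁻¹ * 1 := by
            apply mul_le_mul g3 (le_trans g2 (zpow_le_one' _)) (norm_nonneg _) (by positivity)
        _ < 1 := by rw [mul_one]; exact pinv_lt_one'
    refine ⟨_, ⟨!![a, 0; c, d - c * (b / a)], ?_, !![1, 0; 0, (p:ℚ_[p])],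
      Set.mem_singleton _, rfl⟩, !![1, (p:ℚ_[p]) * (b / a); 0, 1] * u, ?_, ?_⟩
    · -- membership in Iset p (n-1)
      refine ⟨?_, ?_, ?_, ?_⟩
      · simpa using g1
      · show ‖(0:ℚ_[p])‖ ≤ _
        rw [norm_zero]
        exact (zpow_pos ppos' _).le
      · simpa using g3
      · show ‖d - c * (b / a)‖ = 1
        rw [sub_eq_add_neg, padic_add_norm_eq']
        · exact g4
        · rw [norm_neg, g4]; exact hkey
    · -- v * u ∈ Iset p (n-1)
      apply Iset_mul_mem' _ hu
      refine ⟨?_, ?_, ?_, ?_⟩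
      · simp
      · show ‖(p:ℚ_[p]) * (b / a)‖ ≤ (p:ℝ) ^ (-((n-1 : ℕ) : ℤ))
        rw [div_eq_mul_inv, norm_mul, norm_mul, hnorma, mul_one,
          Padic.norm_p]
        have : (p:ℝ)⁻¹ * ‖b‖ ≤ (p:ℝ)⁻¹ * (p:ℝ) ^ (-((n-2:ℕ):ℤ)) := by
          apply mul_le_mul_of_nonneg_left g2 (by positivity)
        refine le_trans this (le_of_eq ?_)
        rw [← zpow_neg_one, ← zpow_add₀ (ne_of_gt ppos')]
        congr 1
        omega
      · show ‖(0:ℚ_[p])‖ ≤ _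
        rw [norm_zero]
        exact hp0'.le
      · simp
    · -- the product equality
      have key : !![a, 0; c, d - c * (b / a)] * !![1, 0; 0, (p:ℚ_[p])] *
          !![1, (p:ℚ_[p]) * (b / a); 0, 1] = g * !![1, 0; 0, (p:ℚ_[p])] := by
        ext i j
        fin_cases i <;> fin_cases j <;>
          · simp [Matrix.mul_apply, Fin.sum_univ_two, ← ha, ← hb, ← hc, ← hd]
            try field_simp
            try ring
      show !![a, 0; c, d - c * (b / a)] * !![1, 0; 0, (p:ℚ_[p])] *
          (!![1, (p:ℚ_[p]) * (b / a); 0, 1] * u) = g * !![1, 0; 0, (p:ℚ_[p])] * u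
      rw [← Matrix.mul_assoc, key]
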